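/- Let G be a finite group and g a p'-element of G. Then g centralizes the hypercentre Z_∞(G). -/

import Mathlib

/-- If `N ⊴ G` is a finite `p`-group contained in the hypercentre of `G` and `g ∈ G` has
order coprime to `p`, then `g` centralizes `N`. -/
theorem stmt_6 {p : ℕ} (hp : p.Prime) {G : Type*} [Group G] [Finite G]
    (N : Subgroup G) (hN : N.Normal) (hNp : IsPGroup p N)
    (hNInf : N ≤ (⨆ n, upperCentralSeries G n : Subgroup G))
    (g : G) (hg : Nat.Coprime (orderOf g) p) :
    ∀ x ∈ N, g * x = x * g := by
  have key : ∀ n : ℕ, ∀ x : G, x ∈ N → x ∈ upperCentralSeries G n → g * x = x * g := by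
    intro n
    induction n with
    | zero =>
      intro x _ hx
      simp only [upperCentralSeries, Subgroup.upperCentralSeries_zero, Subgroup.mem_bot] at hx
      subst hx; simp
    | succ n ih =>
      intro x hxN hx
      rw [upperCentralSeries, Subgroup.mem_upperCentralSeries_succ_iff] at hx
      set c : G := g * x * g⁻¹ * x⁻¹ with hc
      have hcZ : c ∈ upperCentralSeries G n := by
        have h1 : c = (x * g * x⁻¹ * g⁻¹)⁻¹ := by rw [hc]; group
        rw [h1]
        exact (upperCentralSeries G n).inv_mem (hx g)
      have hcN : c ∈ N := by
        have h1 : c = (g * x * g⁻¹) * x⁻¹ := by rw [hc]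
        rw [h1]
        exact N.mul_mem (hN.conj_mem x hxN g) (N.inv_mem hxN)
      have hgc : Commute g c := ih c hcN hcZ
      have hgck : ∀ k : ℕ, g * c ^ k = c ^ k * g := fun k => (hgc.pow_right k)
      have hpow : ∀ k : ℕ, g ^ k * x * (g ^ k)⁻¹ = c ^ k * x := by
        intro k
        induction k with
        | zero => simp
        | succ k ihk =>
          have h2 : g ^ (k + 1) * x * (g ^ (k + 1))⁻¹
              = g * (g ^ k * x * (g ^ k)⁻¹) * g⁻¹ := by
            rw [pow_succ']; group
          rw [h2, ihk]
          calc g * (c ^ k * x) * g⁻¹ = c ^ k * (g * x * g⁻¹) := by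
                rw [← mul_assoc, hgck k, mul_assoc (c ^ k), mul_assoc (c ^ k)]
            _ = c ^ k * (c * x) := by rw [hc]; group
            _ = c ^ (k + 1) * x := by rw [pow_succ]; group
      have hck : c ^ orderOf g = 1 := by
        have h3 := hpow (orderOf g)
        rw [pow_orderOf_eq_one] at h3
        simpa using h3.symm
      have hdvd : orderOf c ∣ orderOf g := orderOf_dvd_of_pow_eq_one hck
      obtain ⟨k, hk⟩ := hNp ⟨c, hcN⟩
      have hcpk : c ^ (p ^ k) = 1 := by
        have := congrArg (Subgroup.subtype N) hk
        simpa using this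
      have hdvd2 : orderOf c ∣ p ^ k := orderOf_dvd_of_pow_eq_one hcpk
      have hcop : Nat.Coprime (orderOf g) (p ^ k) := hg.pow_right k
      have hco : orderOf c = 1 := Nat.eq_one_of_dvd_coprimes hcop hdvd hdvd2
      have hc1 : c = 1 := orderOf_eq_one_iff.mp hco
      have h4 : g * x * g⁻¹ * x⁻¹ = 1 := hc1
      calc g * x = (g * x * g⁻¹ * x⁻¹) * (x * g) := by group
        _ = x * g := by rw [h4, one_mul]
  intro x hxN
  have hx : x ∈ ⨆ n, upperCentralSeries G n := hNInf hxN
  have hdir : Directed (· ≤ ·) (upperCentralSeries G) :=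
    Monotone.directed_le (upperCentralSeries_mono G)
  obtain ⟨n, hn⟩ := (Subgroup.mem_iSup_of_directed hdir).mp hx
  exact key n x hxN hn
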